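/- For integers α, β define a(α,β) = α² + αβ + β², b(α,β) = 2α² − 22αβ − 13β², c(α,β) = −13α² − 4αβ + 11β², d(α,β) = 11α² + 26αβ + 2β². Then for all integers s, t, u, v and every k ∈ {1, 2, 3, 4, 5}, (a(s,t)b(u,v))^k + (−a(s,t)b(u,v))^k + (a(s,t)c(u,v))^k + (−a(s,t)c(u,v))^k + (a(s,t)d(u,v))^k + (−a(s,t)d(u,v))^k = (a(u,v)b(s,t))^k + (−a(u,v)b(s,t))^k + (a(u,v)c(s,t))^k + (−a(u,v)c(s,t))^k + (a(u,v)d(s,t))^k + (−a(u,v)d(s,t))^k. -/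
import Mathlib

/-- The quadratic form `a(α,β) = α² + αβ + β²`. -/
def aQF (α β : ℤ) : ℤ := α ^ 2 + α * β + β ^ 2

/-- The quadratic form `b(α,β) = 2α² − 22αβ − 13β²`. -/
def bQF (α β : ℤ) : ℤ := 2 * α ^ 2 - 22 * α * β - 13 * β ^ 2

/-- The quadratic form `c(α,β) = −13α² − 4αβ + 11β²`. -/
def cQF (α β : ℤ) : ℤ := -13 * α ^ 2 - 4 * α * β + 11 * β ^ 2

/-- The quadratic form `d(α,β) = 11α² + 26αβ + 2β²`. -/
def dQF (α β : ℤ) : ℤ := 11 * α ^ 2 + 26 * α * β + 2 * β ^ 2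

/-- Theorem 1.5 (first part): the two sextuples give an ideal PTE solution of degree 5. -/
theorem stmt_6 (s t u v : ℤ) (k : ℕ) (hk : k ∈ ({1, 2, 3, 4, 5} : Set ℕ)) :
    (aQF s t * bQF u v) ^ k + (-(aQF s t * bQF u v)) ^ k +
      (aQF s t * cQF u v) ^ k + (-(aQF s t * cQF u v)) ^ k +
      (aQF s t * dQF u v) ^ k + (-(aQF s t * dQF u v)) ^ k =
    (aQF u v * bQF s t) ^ k + (-(aQF u v * bQF s t)) ^ k +
      (aQF u v * cQF s t) ^ k + (-(aQF u v * cQF s t)) ^ k +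
      (aQF u v * dQF s t) ^ k + (-(aQF u v * dQF s t)) ^ k := by
  simp only [Set.mem_insert_iff, Set.mem_singleton_iff] at hk
  rcases hk with rfl | rfl | rfl | rfl | rfl <;>
    simp only [aQF, bQF, cQF, dQF] <;> ring
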